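/- Let L1 ⊆ X1* be star-free over alphabet X1 and let X2 be a disjoint alphabet. Then the shuffle language L1' = { w_0 x_1 w_1 ⋯ x_n w_n : w_i ∈ X2*, x_1⋯x_n ∈ L1 } is star-free over X1 ∪ X2. -/

import Mathlib

/-- Star-free languages over an alphabet `A`: the closure of the finite
languages under concatenation, union, intersection, and complementation. -/
inductive StarFree {A : Type*} : Language A → Prop
  | finite (L : Language A) : L.Finite → StarFree L
  | concat (L₁ L₂ : Language A) : StarFree L₁ → StarFree L₂ → StarFree (L₁ * L₂)
  | union (L₁ L₂ : Language A) : StarFree L₁ → StarFree L₂ → StarFree (L₁ ⊔ L₂)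
  | inter (L₁ L₂ : Language A) : StarFree L₁ → StarFree L₂ → StarFree (L₁ ⊓ L₂)
  | compl (L : Language A) : StarFree L → StarFree Lᶜ


section Aux

variable {X₁ X₂ : Type*}

/-- The "shuffle" of a language with arbitrary letters of a second alphabet. -/
private def liftLang (X₂ : Type*) (L : Language X₁) : Language (X₁ ⊕ X₂) :=
  {w | w.filterMap Sum.getLeft? ∈ L}

/-- Words whose `X₁`-subsequence is a fixed word `u`. -/
private def wordLang (X₂ : Type*) (u : List X₁) : Language (X₁ ⊕ X₂) :=
  {w | w.filterMap Sum.getLeft? = u}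

private lemma mem_liftLang {L : Language X₁} {w : List (X₁ ⊕ X₂)} :
    w ∈ liftLang X₂ L ↔ w.filterMap Sum.getLeft? ∈ L := Iff.rfl

private lemma mem_wordLang {u : List X₁} {w : List (X₁ ⊕ X₂)} :
    w ∈ wordLang X₂ u ↔ w.filterMap Sum.getLeft? = u := Iff.rfl

private lemma sf_top {A : Type*} : StarFree (⊤ : Language A) := by
  have h := StarFree.compl (⊥ : Language A) (StarFree.finite _ Set.finite_empty)
  simpa using h

private lemma sf_onlyRight [Fintype X₁] :
    StarFree (wordLang X₂ ([] : List X₁)) := by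
  have key : wordLang X₂ ([] : List X₁) =
      ((Finset.univ : Finset X₁).sup
        (fun x => (⊤ : Language (X₁ ⊕ X₂)) * {[Sum.inl x]} * ⊤))ᶜ := by
    rw [Finset.sup_eq_iSup]
    simp only [Finset.mem_univ, iSup_true]
    ext w
    constructor
    · intro hw hx
      replace hx := Language.mem_iSup.mp hx
      obtain ⟨x, hx⟩ := hx
      rw [Language.mem_mul] at hx
      obtain ⟨a, ha, b, -, rfl⟩ := hx
      rw [Language.mem_mul] at ha
      obtain ⟨s, -, t, ht, rfl⟩ := ha
      replace ht : t = [Sum.inl x] := ht; subst ht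
      rw [mem_wordLang, List.filterMap_eq_nil_iff] at hw
      have := hw (Sum.inl x) (by simp)
      simp at this
    · intro hw
      rw [mem_wordLang, List.filterMap_eq_nil_iff]
      intro a ha
      cases a with
      | inl x =>
        exfalso
        apply hw
        refine Language.mem_iSup.mpr ?_
        refine ⟨x, ?_⟩
        obtain ⟨s, t, rfl⟩ := List.append_of_mem ha
        rw [Language.mem_mul]
        exact ⟨s ++ [Sum.inl x], Language.mem_mul.mpr ⟨s, trivial, [Sum.inl x], rfl, rfl⟩,
          t, trivial, by simp⟩
      | inr y => rfl
  rw [key]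
  refine StarFree.compl _ ?_
  refine Finset.sup_induction (StarFree.finite ⊥ Set.finite_empty) ?_ ?_
  · exact fun a ha b hb => StarFree.union a b ha hb
  · intro x _
    exact StarFree.concat _ _
      (StarFree.concat _ _ sf_top (StarFree.finite _ (Set.finite_singleton _))) sf_top

private lemma sf_word [Fintype X₁] (u : List X₁) :
    StarFree (wordLang X₂ u) := by
  induction u with
  | nil => exact sf_onlyRight
  | cons x u ih =>
    have key : wordLang X₂ (x :: u) =
        wordLang X₂ ([] : List X₁) * {[Sum.inl x]} * wordLang X₂ u := by
      ext w
      constructor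
      · intro hw
        rw [mem_wordLang, List.filterMap_eq_cons_iff] at hw
        obtain ⟨l₁, a, l₂, rfl, h₁, h₂, h₃⟩ := hw
        cases a with
        | inl y =>
          obtain rfl : y = x := by simpa using h₂
          rw [Language.mem_mul]
          exact ⟨l₁ ++ [Sum.inl y],
            Language.mem_mul.mpr ⟨l₁, List.filterMap_eq_nil_iff.mpr h₁, [Sum.inl y], rfl, rfl⟩,
            l₂, h₃, by simp⟩
        | inr y => simp at h₂
      · intro hw
        rw [Language.mem_mul] at hw
        obtain ⟨p, hp, q, hq, rfl⟩ := hw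
        rw [Language.mem_mul] at hp
        obtain ⟨s, hs, t, ht, rfl⟩ := hp
        replace ht : t = [Sum.inl x] := ht; subst ht
        rw [mem_wordLang] at hq hs ⊢
        rw [List.filterMap_eq_cons_iff]
        exact ⟨s, Sum.inl x, q, by simp, List.filterMap_eq_nil_iff.mp hs, rfl, hq⟩
    rw [key]
    exact StarFree.concat _ _
      (StarFree.concat _ _ sf_onlyRight (StarFree.finite _ (Set.finite_singleton _))) ih

private lemma sf_lift [Fintype X₁] {L : Language X₁} (h : StarFree L) :
    StarFree (liftLang X₂ L) := by
  induction h with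
  | finite L hL =>
    refine Set.Finite.induction_on
      (motive := fun t _ => StarFree (liftLang X₂ t)) L hL
      (StarFree.finite _ (Set.Finite.subset Set.finite_empty fun w hw => hw)) ?_
    intro u s hu hs ih
    have key : liftLang X₂ (insert u s) = wordLang X₂ u ⊔ liftLang X₂ s := by
      ext w
      rw [mem_liftLang]
      exact Iff.rfl
    refine (congrArg StarFree key).mpr ?_
    exact StarFree.union _ _ (sf_word u) ih
  | concat L₁ L₂ h₁ h₂ ih₁ ih₂ =>
    have key : liftLang X₂ (L₁ * L₂) = liftLang X₂ L₁ * liftLang X₂ L₂ := by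
      ext w
      rw [mem_liftLang, Language.mem_mul, Language.mem_mul]
      constructor
      · rintro ⟨a, ha, b, hb, hab⟩
        obtain ⟨w₁, w₂, rfl, h1, h2⟩ := List.filterMap_eq_append_iff.mp hab.symm
        exact ⟨w₁, mem_liftLang.mpr (h1 ▸ ha), w₂, mem_liftLang.mpr (h2 ▸ hb), rfl⟩
      · rintro ⟨w₁, h1, w₂, h2, rfl⟩
        exact ⟨_, mem_liftLang.mp h1, _, mem_liftLang.mp h2, by simp⟩
    rw [key]
    exact StarFree.concat _ _ ih₁ ih₂
  | union L₁ L₂ h₁ h₂ ih₁ ih₂ =>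
    have key : liftLang X₂ (L₁ ⊔ L₂) = liftLang X₂ L₁ ⊔ liftLang X₂ L₂ := rfl
    rw [key]; exact StarFree.union _ _ ih₁ ih₂
  | inter L₁ L₂ h₁ h₂ ih₁ ih₂ =>
    have key : liftLang X₂ (L₁ ⊓ L₂) = liftLang X₂ L₁ ⊓ liftLang X₂ L₂ := rfl
    rw [key]; exact StarFree.inter _ _ ih₁ ih₂
  | compl L hL ih =>
    have key : liftLang X₂ Lᶜ = (liftLang X₂ L)ᶜ := rfl
    rw [key]; exact StarFree.compl _ ih

end Aux

/-- If `L₁ ⊆ X₁*` is star-free, then the shuffle of `L₁` with arbitrary words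
over a disjoint alphabet `X₂` is star-free over `X₁ ⊕ X₂`: this shuffle is the
set of words whose subsequence of `X₁`-letters lies in `L₁`. -/
theorem stmt14 {X₁ X₂ : Type*} [Fintype X₁] [Fintype X₂] (L₁ : Language X₁)
    (h : StarFree L₁) :
    StarFree {w : List (X₁ ⊕ X₂) | w.filterMap Sum.getLeft? ∈ L₁} := by
  exact sf_lift h
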